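/- Let k ≥ 4 be an integer and let R be a k-ring such that χ(R) = ω(R). Then R contains a k-hyperhole H as an induced subgraph such that χ(H) = χ(R). -/

import Mathlib

open SimpleGraph

/-- The closed neighborhood `N_G[v]` of a vertex `v`. -/
def closedNbhd {V : Type} (G : SimpleGraph V) (v : V) : Set V :=
  insert v (G.neighborSet v)

/-- `X` (indexed cyclically by `ZMod k`) is a ring partition of `G`:
a partition into `k` nonempty sets, each of which can be ordered so that the
closed neighborhoods are nested, with the last one covering `X i` and the first
one being exactly `X (i-1) ∪ X i ∪ X (i+1)`. -/
def IsRingPartition {V : Type} (G : SimpleGraph V) (k : ℕ) (X : ZMod k → Set V) : Prop :=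
  (∀ i, (X i).Nonempty) ∧
  (∀ v : V, ∃! i, v ∈ X i) ∧
  ∀ i, ∃ (m : ℕ) (hm : 0 < m) (u : Fin m → V),
    Function.Injective u ∧
    Set.range u = X i ∧
    (∀ j j' : Fin m, j ≤ j' → closedNbhd G (u j') ⊆ closedNbhd G (u j)) ∧
    X i ⊆ closedNbhd G (u ⟨m - 1, by omega⟩) ∧
    closedNbhd G (u ⟨0, hm⟩) = X (i - 1) ∪ X i ∪ X (i + 1)

/-- `G` is a `k`-ring. -/
def IsRing {V : Type} (G : SimpleGraph V) (k : ℕ) : Prop :=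
  ∃ X : ZMod k → Set V, IsRingPartition G k X

/-- `X` is a hyperhole partition of `G`: a partition into `k` nonempty cliques,
each complete to the two neighboring cliques and anticomplete to all remaining
vertices. -/
def IsHyperholePartition {V : Type} (G : SimpleGraph V) (k : ℕ) (X : ZMod k → Set V) : Prop :=
  (∀ i, (X i).Nonempty) ∧
  (∀ v : V, ∃! i, v ∈ X i) ∧
  (∀ i, G.IsClique (X i)) ∧
  (∀ i, ∀ x ∈ X i, ∀ y ∈ X (i - 1) ∪ X (i + 1), G.Adj x y) ∧
  (∀ i, ∀ x ∈ X i, ∀ y, y ∉ X (i - 1) ∪ X i ∪ X (i + 1) → ¬ G.Adj x y)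

/-- `G` is a `k`-hyperhole. -/
def IsHyperhole {V : Type} (G : SimpleGraph V) (k : ℕ) : Prop :=
  ∃ X : ZMod k → Set V, IsHyperholePartition G k X

/-- `X` is a hyperantihole partition of `G`: a partition into `k` nonempty cliques,
each complete to all vertices outside the two neighboring cliques (and itself),
and anticomplete to the two neighboring cliques. -/
def IsHyperantiholePartition {V : Type} (G : SimpleGraph V) (k : ℕ) (X : ZMod k → Set V) : Prop :=
  (∀ i, (X i).Nonempty) ∧
  (∀ v : V, ∃! i, v ∈ X i) ∧
  (∀ i, G.IsClique (X i)) ∧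
  (∀ i, ∀ x ∈ X i, ∀ y, y ∉ X (i - 1) ∪ X i ∪ X (i + 1) → G.Adj x y) ∧
  (∀ i, ∀ x ∈ X i, ∀ y ∈ X (i - 1) ∪ X (i + 1), ¬ G.Adj x y)

/-- `G` is a `k`-hyperantihole. -/
def IsHyperantihole {V : Type} (G : SimpleGraph V) (k : ℕ) : Prop :=
  ∃ X : ZMod k → Set V, IsHyperantiholePartition G k X

/-- A vertex is simplicial if its neighborhood is a clique. -/
def IsSimplicial {V : Type} (G : SimpleGraph V) (v : V) : Prop :=
  G.IsClique (G.neighborSet v)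

/-- A graph is perfect if every induced subgraph has chromatic number equal to
its clique number. -/
def IsPerfect {V : Type} (G : SimpleGraph V) : Prop :=
  ∀ S : Set V, (G.induce S).chromaticNumber = ((G.induce S).cliqueNum : ℕ∞)

/-- The function `f_k`: `⌊kn/(k-1)⌋` if `n ≡ 0, 1 (mod k-1)`, and `⌈kn/(k-1)⌉`
otherwise. -/
def ringF (k n : ℕ) : ℕ :=
  if n % (k - 1) ≤ 1 then k * n / (k - 1) else (k * n + (k - 2)) / (k - 1)

/-- The function `g_k`: `⌊kn/(k-1)⌋` if `n mod (k-1) ∈ {0, …, (k-3)/2}`, and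
`⌈kn/(k-1)⌉` if `n mod (k-1) ∈ {(k-1)/2, …, k-2}`. -/
def ringG (k n : ℕ) : ℕ :=
  if n % (k - 1) ≤ (k - 3) / 2 then k * n / (k - 1) else (k * n + (k - 2)) / (k - 1)

/-- The function `f_T`: `⌊5n/4⌋` if `n ≡ 0, 1 (mod 4)`, and `⌈5n/4⌉` if
`n ≡ 2, 3 (mod 4)`. -/
def fT (n : ℕ) : ℕ :=
  if n % 4 ≤ 1 then 5 * n / 4 else (5 * n + 3) / 4

/-- `G` contains the complete graph `K_m` as a minor, witnessed by `m` pairwise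
disjoint nonempty branch sets, each inducing a connected subgraph, with an edge
between every two of them. -/
def HasCompleteMinor {V : Type} (G : SimpleGraph V) (m : ℕ) : Prop :=
  ∃ S : Fin m → Set V,
    (∀ i, (S i).Nonempty) ∧
    (∀ i j, i ≠ j → Disjoint (S i) (S j)) ∧
    (∀ i, (G.induce (S i)).Connected) ∧
    (∀ i j, i ≠ j → ∃ x ∈ S i, ∃ y ∈ S j, G.Adj x y)

/-- If `R` is a `k`-ring with `χ(R) = ω(R)`, then `R` contains an induced
`k`-hyperhole `H` with `χ(H) = χ(R)`. -/
theorem ring_chi_eq_omega_hyperhole {V : Type} [Fintype V]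
    (k : ℕ) (hk : 4 ≤ k) (R : SimpleGraph V) (hR : IsRing R k)
    (hχω : R.chromaticNumber = (R.cliqueNum : ℕ∞)) :
    ∃ S : Set V, IsHyperhole (R.induce S) k ∧
      (R.induce S).chromaticNumber = R.chromaticNumber := by
  classical
  obtain ⟨X, hne, huniq, hord⟩ := hR
  haveI : NeZero k := ⟨by omega⟩
  -- index distinctness
  have h1 : (1 : ZMod k) ≠ 0 := by
    have : ((1 : ℕ) : ZMod k) ≠ 0 := by
      rw [Ne, ZMod.natCast_eq_zero_iff, Nat.dvd_one]
      omega
    simpa using this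
  have h2 : (2 : ZMod k) ≠ 0 := by
    have : ((2 : ℕ) : ZMod k) ≠ 0 := by
      rw [Ne, ZMod.natCast_eq_zero_iff]
      intro h
      have := Nat.le_of_dvd (by norm_num) h
      omega
    simpa using this
  have hdisj : ∀ {v : V} {i j : ZMod k}, v ∈ X i → v ∈ X j → i = j := by
    intro v i j hi hj
    exact ((huniq v).unique hi hj)
  -- extraction of the leading vertex of each part
  have key : ∀ i : ZMod k, ∃ w, w ∈ X i ∧
      closedNbhd R w = X (i-1) ∪ X i ∪ X (i+1) ∧
      ∀ x ∈ X i, closedNbhd R x ⊆ X (i-1) ∪ X i ∪ X (i+1) ∧ X i ⊆ closedNbhd R x := by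
    intro i
    obtain ⟨m, hm, u, huinj, hurange, hnest, hcover, hfirst⟩ := hord i
    refine ⟨u ⟨0, hm⟩, ?_, hfirst, ?_⟩
    · rw [← hurange]; exact ⟨_, rfl⟩
    · intro x hx
      rw [← hurange] at hx
      obtain ⟨j, rfl⟩ := hx
      constructor
      · rw [← hfirst]
        exact hnest ⟨0, hm⟩ j (by simp [Fin.le_def])
      · refine hcover.trans (hnest j ⟨m - 1, by omega⟩ ?_)
        have := j.isLt
        simp only [Fin.le_def]
        omega
  choose w hwX hwN hXprop using key
  have adj_of_mem : ∀ {a b : V}, b ∈ closedNbhd R a → b ≠ a → R.Adj a b := by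
    intro a b hb hne
    rcases Set.mem_insert_iff.mp hb with h | h
    · exact absurd h hne
    · exact h
  have hclique : ∀ i, R.IsClique (X i) := by
    intro i x hx y hy hxy
    exact adj_of_mem ((hXprop i x hx).2 hy) (fun h => hxy h.symm) |>.symm.symm
  -- max clique
  obtain ⟨K, hK⟩ := R.exists_isNClique_cliqueNum
  set Y : ZMod k → Set V := fun j => ((K : Set V) ∩ X j) ∪ {w j} with hY
  have hYX : ∀ j, Y j ⊆ X j := by
    intro j x hx
    rcases hx with hx | hx
    · exact hx.2
    · rw [Set.mem_singleton_iff] at hx; exact hx ▸ hwX j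
  have hwY : ∀ j, w j ∈ Y j := fun j => Or.inr rfl
  set S : Set V := ⋃ j, Y j with hS
  have hYS : ∀ j, Y j ⊆ S := fun j => Set.subset_iUnion Y j
  -- adjacency between consecutive Y's
  have hadjY : ∀ (i : ZMod k) (x y : V), x ∈ Y i → y ∈ Y (i + 1) → R.Adj x y := by
    intro i x y hx hy
    have hxX : x ∈ X i := hYX i hx
    have hyX : y ∈ X (i + 1) := hYX (i + 1) hy
    have hne : x ≠ y := by
      intro h; subst h
      have := hdisj hxX hyX
      exact h1 (by linear_combination -this)
    rcases hy with hy | hy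
    · rcases hx with hx | hx
      · exact hK.isClique hx.1 hy.1 hne
      · -- x = w i
        rw [Set.mem_singleton_iff] at hx
        subst hx
        refine adj_of_mem ?_ (fun h => hne h.symm)
        rw [hwN i]
        exact Or.inr hyX
    · -- y = w (i+1)
      rw [Set.mem_singleton_iff] at hy
      subst hy
      refine (adj_of_mem ?_ hne).symm
      rw [hwN (i + 1)]
      have : (i + 1) - 1 = i := by ring
      rw [this]
      exact Or.inl (Or.inl hxX)
  refine ⟨S, ?_, ?_⟩
  · -- hyperhole
    refine ⟨fun j => {v : ↥S | (v : V) ∈ Y j}, ?_, ?_, ?_, ?_, ?_⟩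
    · intro j
      exact ⟨⟨w j, hYS j (hwY j)⟩, hwY j⟩
    · intro v
      obtain ⟨j, hj⟩ := Set.mem_iUnion.mp v.2
      exact ⟨j, hj, fun j' hj' => hdisj (hYX j' hj') (hYX j hj)⟩
    · intro i a ha b hb hab
      exact hclique i (hYX i ha) (hYX i hb) (fun h => hab (Subtype.ext h))
    · intro i x hx y hy
      rcases hy with hy | hy
      · have : ((i : ZMod k) - 1) + 1 = i := by ring
        exact (hadjY (i - 1) (y : V) (x : V) hy (by rw [this]; exact hx)).symm
      · exact hadjY i (x : V) (y : V) hx hy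
    · intro i x hx y hy hadj
      obtain ⟨m, hm⟩ := Set.mem_iUnion.mp y.2
      have hyXm : (y : V) ∈ X m := hYX m hm
      have hadj' : R.Adj (x : V) (y : V) := hadj
      have hyN : (y : V) ∈ closedNbhd R (x : V) := Or.inr hadj'
      have := (hXprop i (x : V) (hYX i hx)).1 hyN
      rcases this with (h | h) | h
      · exact hy (Or.inl (Or.inl (by rw [hdisj hyXm h] at hm; exact hm)))
      · exact hy (Or.inl (Or.inr (by rw [hdisj hyXm h] at hm; exact hm)))
      · exact hy (Or.inr (by rw [hdisj hyXm h] at hm; exact hm))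
  · -- chromatic number
    have le1 : (R.induce S).chromaticNumber ≤ R.chromaticNumber :=
      chromaticNumber_mono_of_hom (Embedding.induce S).toHom
    have hKS : ∀ x ∈ K, x ∈ S := by
      intro x hx
      obtain ⟨m, hm⟩ := (huniq x).exists
      exact hYS m (Or.inl ⟨hx, hm⟩)
    set K' : Finset ↥S := K.attach.map
      ⟨fun x => (⟨x.1, hKS x.1 x.2⟩ : ↥S), by
        intro a b h
        exact Subtype.ext (by simpa using congrArg Subtype.val h)⟩ with hK'
    have hK'val : ∀ a ∈ K', (a : V) ∈ K := by
      intro a ha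
      rw [hK', Finset.mem_map] at ha
      obtain ⟨x, hx, rfl⟩ := ha
      exact x.2
    have hK'clique : (R.induce S).IsClique (K' : Set ↥S) := by
      intro a ha b hb hab
      exact hK.isClique (hK'val a (Finset.mem_coe.mp ha)) (hK'val b (Finset.mem_coe.mp hb))
        (fun h => hab (Subtype.ext h))
    have hK'card : K'.card = R.cliqueNum := by
      rw [hK', Finset.card_map, Finset.card_attach, hK.card_eq]
    have ge1 : R.chromaticNumber ≤ (R.induce S).chromaticNumber := by
      rw [hχω, ← hK'card]
      exact hK'clique.card_le_chromaticNumber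
    exact le_antisymm le1 ge1
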